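/- For every nonzero z = v − w ∈ ℝ³, writing n₀ = z/|z| and a(z) = |z|²I₃ − zzᵀ, the following inequality of 6×6 symmetric matrices holds: (1/2)[[I₃, I₃],[I₃, I₃]] + (1/(2|z|²))[[a(z), −a(z)],[−a(z), a(z)]] ≥ (1/|z|²)[[a(z), 0],[0, a(z)]] in the sense of positive semidefinite ordering. -/

import Mathlib

open Finset Matrix

lemma psd_vecMulVec {n : Type*} [Fintype n] (u : n → ℝ) :
    Matrix.PosSemidef (Matrix.vecMulVec u u) := by
  have : Matrix.vecMulVec u u = (Matrix.replicateRow Unit u)ᴴ * Matrix.replicateRow Unit u := by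
    ext i j
    simp [Matrix.vecMulVec, Matrix.mul_apply, Matrix.replicateRow, mul_comm]
  rw [this]
  exact Matrix.posSemidef_conjTranspose_mul_self _

lemma psd_smul {n : Type*} [Fintype n] {M : Matrix n n ℝ} (h : M.PosSemidef)
    {c : ℝ} (hc : 0 ≤ c) : (c • M).PosSemidef := by
  refine posSemidef_iff_dotProduct_mulVec.mpr ⟨?_, fun x => ?_⟩
  · show _ᴴ = _
    rw [Matrix.conjTranspose_smul, h.1]
    simp
  rw [smul_mulVec, dotProduct_smul, smul_eq_mul]
  exact mul_nonneg hc (h.dotProduct_mulVec_nonneg x)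

theorem stmt_2 (z : Fin 3 → ℝ) (hz : z ≠ 0)
    (a : Matrix (Fin 3) (Fin 3) ℝ)
    (ha : a = (∑ l : Fin 3, z l ^ 2) • (1 : Matrix (Fin 3) (Fin 3) ℝ) - Matrix.vecMulVec z z) :
    Matrix.PosSemidef
      ((1 / 2 : ℝ) • Matrix.fromBlocks (1 : Matrix (Fin 3) (Fin 3) ℝ) 1 1 1
        + (1 / (2 * ∑ l : Fin 3, z l ^ 2)) • Matrix.fromBlocks a (-a) (-a) a
        - (1 / (∑ l : Fin 3, z l ^ 2)) • Matrix.fromBlocks a 0 0 a) := by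
  have hspos : 0 < ∑ l : Fin 3, z l ^ 2 := by
    obtain ⟨l, hl⟩ := Function.ne_iff.mp hz
    have hl' : z l ≠ 0 := by simpa using hl
    exact Finset.sum_pos' (fun i _ => sq_nonneg _)
      ⟨l, Finset.mem_univ l, by positivity⟩
  set s : ℝ := ∑ l : Fin 3, z l ^ 2 with hs
  have hsne : s ≠ 0 := ne_of_gt hspos
  have hM : ((1 / 2 : ℝ) • Matrix.fromBlocks (1 : Matrix (Fin 3) (Fin 3) ℝ) 1 1 1
        + (1 / (2 * s)) • Matrix.fromBlocks a (-a) (-a) a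
        - (1 / s) • Matrix.fromBlocks a 0 0 a)
      = (1 / (2 * s)) • Matrix.vecMulVec (Sum.elim z z) (Sum.elim z z) := by
    subst ha
    ext i j
    rcases i with i | i <;> rcases j with j | j <;>
      simp [Matrix.fromBlocks, Matrix.vecMulVec, Matrix.one_apply, Matrix.sub_apply,
        Matrix.add_apply, Matrix.smul_apply, smul_eq_mul] <;>
      by_cases h : i = j <;>
      simp only [h, if_true, if_neg, ite_true, if_false] <;> field_simp <;> ring
  rw [hM]
  exact psd_smul (psd_vecMulVec _) (by positivity)
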